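/- Let H be a strictly balanced graph and let F = (V_1 ∪ V_2, E_1 ∪ E_2) be the union of two distinct copies (V_1,E_1) and (V_2,E_2) of H (each isomorphic to H, not equal as labeled graphs) that share at least one edge, i.e., E_1 ∩ E_2 ≠ ∅. Then den(F) > den(H), where den(G) = e(G)/v(G). -/

import Mathlib

/-- `H` is strictly balanced: every proper subgraph with at least one edge has
strictly smaller density. -/
def IsStrictlyBalanced {v : ℕ} (H : SimpleGraph (Fin v)) : Prop :=
  ∀ H' : H.Subgraph, H' ≠ ⊤ → H'.edgeSet.Nonempty →
    (H'.edgeSet.ncard : ℝ) / (H'.verts.ncard : ℝ) < (H.edgeSet.ncard : ℝ) / v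

/-- The edge set of the copy of `H` given by the injection `f`. -/
def copyEdges {v N : ℕ} (H : SimpleGraph (Fin v)) [DecidableRel H.Adj]
    (f : Fin v ↪ Fin N) : Finset (Sym2 (Fin N)) :=
  H.edgeFinset.image (Sym2.map ⇑f)

def interSubgraph {v N : ℕ} (H : SimpleGraph (Fin v)) [DecidableRel H.Adj]
    (f g : Fin v ↪ Fin N) : H.Subgraph where
  verts := {x | f x ∈ Set.range ⇑g}
  Adj x y := H.Adj x y ∧ Sym2.map ⇑f s(x, y) ∈ copyEdges H g
  adj_sub h := h.1
  edge_vert := by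
    rintro x y ⟨hadj, hmem⟩
    simp only [copyEdges, Finset.mem_image] at hmem
    obtain ⟨s, hs, hmap⟩ := hmem
    induction s using Sym2.ind with
    | _ a b =>
      rw [Sym2.map_pair_eq, Sym2.map_pair_eq] at hmap
      rcases Sym2.eq_iff.mp hmap with ⟨h1, h2⟩ | ⟨h1, h2⟩
      · exact ⟨a, h1⟩
      · exact ⟨b, h2⟩
  symm := by
    constructor
    rintro x y ⟨hadj, hmem⟩
    refine ⟨hadj.symm, ?_⟩
    rwa [Sym2.map_pair_eq, Sym2.eq_swap, ← Sym2.map_pair_eq]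

lemma edge_image {v N : ℕ} (H : SimpleGraph (Fin v)) [DecidableRel H.Adj]
    (f g : Fin v ↪ Fin N) :
    (Sym2.map ⇑f) '' (interSubgraph H f g).edgeSet
      = ↑(copyEdges H f ∩ copyEdges H g) := by
  ext t
  simp only [Set.mem_image, Finset.coe_inter, Set.mem_inter_iff, Finset.mem_coe]
  constructor
  · rintro ⟨s, hs, rfl⟩
    induction s using Sym2.ind with
    | _ x y =>
      rw [SimpleGraph.Subgraph.mem_edgeSet] at hs
      obtain ⟨hadj, hg⟩ := hs
      refine ⟨?_, hg⟩
      simp only [copyEdges, Finset.mem_image]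
      exact ⟨s(x, y), by simpa using hadj, rfl⟩
  · rintro ⟨hf, hg⟩
    simp only [copyEdges, Finset.mem_image] at hf
    obtain ⟨s, hs, rfl⟩ := hf
    induction s using Sym2.ind with
    | _ x y =>
      refine ⟨s(x, y), ?_, rfl⟩
      rw [SimpleGraph.Subgraph.mem_edgeSet]
      exact ⟨by simpa using hs, hg⟩

lemma vert_image {v N : ℕ} (H : SimpleGraph (Fin v)) [DecidableRel H.Adj]
    (f g : Fin v ↪ Fin N) :
    ⇑f '' (interSubgraph H f g).verts
      = ↑(Finset.univ.image ⇑f ∩ Finset.univ.image ⇑g) := by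
  ext t
  simp [interSubgraph, Set.mem_image, Set.range]
  constructor
  · rintro ⟨x, ⟨a, ha⟩, rfl⟩
    exact ⟨⟨x, rfl⟩, ⟨a, ha⟩⟩
  · rintro ⟨⟨x, rfl⟩, ⟨a, ha⟩⟩
    exact ⟨x, ⟨a, ha⟩, rfl⟩

theorem statement17 (v : ℕ) (H : SimpleGraph (Fin v)) [DecidableRel H.Adj]
    (hbal : IsStrictlyBalanced H)
    (N : ℕ) (f g : Fin v ↪ Fin N)
    -- the two copies of `H` are distinct as labeled graphs:
    (hne : ¬ (Finset.univ.image ⇑f = Finset.univ.image ⇑g ∧ copyEdges H f = copyEdges H g))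
    -- they share at least one edge:
    (hshare : (copyEdges H f ∩ copyEdges H g).Nonempty) :
    (H.edgeFinset.card : ℝ) / v <
      ((copyEdges H f ∪ copyEdges H g).card : ℝ) /
        ((Finset.univ.image ⇑f ∪ Finset.univ.image ⇑g).card : ℝ) := by
  classical
  set H' := interSubgraph H f g with hH'
  set e := H.edgeFinset.card with he
  set ie := (copyEdges H f ∩ copyEdges H g).card with hie
  set iv := (Finset.univ.image ⇑f ∩ Finset.univ.image ⇑g).card with hiv
  have hfinj : Function.Injective ⇑f := f.injective
  have hginj : Function.Injective ⇑g := g.injective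
  have hsfinj : Function.Injective (Sym2.map ⇑f) := Sym2.map.injective hfinj
  have hsginj : Function.Injective (Sym2.map ⇑g) := Sym2.map.injective hginj
  -- card facts
  have hcf : (copyEdges H f).card = e := Finset.card_image_of_injective _ hsfinj
  have hcg : (copyEdges H g).card = e := Finset.card_image_of_injective _ hsginj
  have hvf : (Finset.univ.image ⇑f).card = v := by
    rw [Finset.card_image_of_injective _ hfinj, Finset.card_univ, Fintype.card_fin]
  have hvg : (Finset.univ.image ⇑g).card = v := by
    rw [Finset.card_image_of_injective _ hginj, Finset.card_univ, Fintype.card_fin]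
  have hedge_ncard : H'.edgeSet.ncard = ie := by
    rw [← Set.ncard_image_of_injective _ hsfinj, edge_image, Set.ncard_coe_finset]
  have hvert_ncard : H'.verts.ncard = iv := by
    rw [← Set.ncard_image_of_injective _ hfinj, vert_image, Set.ncard_coe_finset]
  -- the intersection subgraph has an edge
  obtain ⟨t, ht⟩ := hshare
  have htmem : t ∈ (Sym2.map ⇑f) '' H'.edgeSet := by
    rw [edge_image]; exact_mod_cast ht
  obtain ⟨s, hs, rfl⟩ := htmem
  have hedgeNE : H'.edgeSet.Nonempty := ⟨s, hs⟩
  -- H' ≠ ⊤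
  have hne' : H' ≠ ⊤ := by
    intro htop
    apply hne
    constructor
    · apply Finset.eq_of_subset_of_card_le
      · intro x hx
        simp only [Finset.mem_image, Finset.mem_univ, true_and] at hx ⊢
        obtain ⟨a, rfl⟩ := hx
        have : a ∈ H'.verts := by rw [htop]; trivial
        obtain ⟨b, hb⟩ := this
        exact ⟨b, hb⟩
      · rw [hvf, hvg]
    · apply Finset.eq_of_subset_of_card_le
      · intro t htmem
        simp only [copyEdges, Finset.mem_image] at htmem
        obtain ⟨s, hs, rfl⟩ := htmem
        induction s using Sym2.ind with
        | _ x y =>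
          have hadj : H.Adj x y := by simpa using hs
          have : H'.Adj x y := by rw [htop]; exact hadj
          exact this.2
      · rw [hcf, hcg]
  -- apply strict balance
  have hb := hbal H' hne' hedgeNE
  rw [hedge_ncard, hvert_ncard] at hb
  have hEncard : H.edgeSet.ncard = e := by
    rw [← SimpleGraph.coe_edgeFinset, Set.ncard_coe_finset]
  rw [hEncard] at hb
  -- positivity facts
  have hie1 : 1 ≤ ie := Finset.card_pos.mpr ⟨_, ht⟩
  have hiv1 : 1 ≤ iv := by
    rw [← hvert_ncard]
    have : H'.verts.Nonempty := by
      induction s using Sym2.ind with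
      | _ x y => exact ⟨x, H'.edge_vert ((SimpleGraph.Subgraph.mem_edgeSet).mp hs)⟩
    have hfin : H'.verts.Finite := Set.toFinite _
    exact (Set.ncard_pos hfin).mpr this
  have hiev : ie ≤ e := by rw [← hcf]; exact Finset.card_le_card Finset.inter_subset_left
  have hivv : iv ≤ v := by rw [← hvf]; exact Finset.card_le_card Finset.inter_subset_left
  have hv1 : 1 ≤ v := le_trans hiv1 hivv
  -- union cards
  have hUe : (copyEdges H f ∪ copyEdges H g).card + ie = e + e := by
    rw [hie, Finset.card_union_add_card_inter, hcf, hcg]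
  have hUv : (Finset.univ.image ⇑f ∪ Finset.univ.image ⇑g).card + iv = v + v := by
    rw [hiv, Finset.card_union_add_card_inter, hvf, hvg]
  -- real arithmetic
  have hUeR : ((copyEdges H f ∪ copyEdges H g).card : ℝ) = 2 * e - ie := by
    have := congrArg (Nat.cast (R := ℝ)) hUe; push_cast at this; linarith
  have hUvR : ((Finset.univ.image ⇑f ∪ Finset.univ.image ⇑g).card : ℝ) = 2 * v - iv := by
    have := congrArg (Nat.cast (R := ℝ)) hUv; push_cast at this; linarith
  rw [hUeR, hUvR]
  have hivR : (0:ℝ) < iv := by exact_mod_cast hiv1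
  have hvR : (0:ℝ) < v := by exact_mod_cast hv1
  have hivvR : (iv:ℝ) ≤ v := by exact_mod_cast hivv
  have hW : (0:ℝ) < 2 * v - iv := by linarith
  have hcross : (ie:ℝ) * v < e * iv := (div_lt_div_iff₀ hivR hvR).mp hb
  rw [div_lt_div_iff₀ hvR hW]
  nlinarith [hcross]
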